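/- Let Y = Xβ + ε with supp(β) = S, and let β̂ be a Lasso solution with λ ≥ 2 max|X'ε/n|. Suppose φ(3,S) > 0, where φ²(L,S) is the restricted eigenvalue statistic. Then ‖X(β̂ − β)‖²_n ≤ 4(λ + max|X'ε/n|)²|S|/φ²(3,S) ≤ (9λ²|S|)/φ²(3,S). -/

import Mathlib

open Finset

noncomputable section

/-- Squared Euclidean norm of `δ` restricted to `A`. -/
def sqNormOn {p : ℕ} (A : Finset (Fin p)) (δ : Fin p → ℝ) : ℝ := ∑ i ∈ A, δ i ^ 2

/-- ℓ¹ norm of `δ` restricted to `A`. -/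
def l1On {p : ℕ} (A : Finset (Fin p)) (δ : Fin p → ℝ) : ℝ := ∑ i ∈ A, |δ i|

/-- Empirical squared prediction norm `‖Xδ‖²_n = ‖Xδ‖²/n`. -/
def predSq {n p : ℕ} (X : Matrix (Fin n) (Fin p) ℝ) (δ : Fin p → ℝ) : ℝ :=
  (∑ i, (X.mulVec δ) i ^ 2) / n

/-- The restricted cone condition `‖δ_{S^c}‖₁ ≤ L√|S|‖δ_S‖`. -/
def cone {p : ℕ} (L : ℝ) (S : Finset (Fin p)) (δ : Fin p → ℝ) : Prop :=
  l1On Sᶜ δ ≤ L * Real.sqrt S.card * Real.sqrt (sqNormOn S δ)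

/-- Restricted eigenvalue statistic `φ²(L,S) = φ²(L,S,|S|)`. -/
def phiSq {n p : ℕ} (X : Matrix (Fin n) (Fin p) ℝ) (L : ℝ)
    (S : Finset (Fin p)) : ℝ :=
  sInf {r | ∃ δ : Fin p → ℝ, ∃ M : Finset (Fin p), δ ≠ 0 ∧ S ⊆ M ∧
    M.card ≤ S.card ∧ cone L S δ ∧ r = predSq X δ / sqNormOn M δ}

lemma sqNormOn_nonneg {p : ℕ} (A : Finset (Fin p)) (δ : Fin p → ℝ) :
    0 ≤ sqNormOn A δ := Finset.sum_nonneg fun i _ => sq_nonneg _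

lemma l1On_nonneg {p : ℕ} (A : Finset (Fin p)) (δ : Fin p → ℝ) :
    0 ≤ l1On A δ := Finset.sum_nonneg fun i _ => abs_nonneg _

lemma predSq_nonneg {n p : ℕ} (X : Matrix (Fin n) (Fin p) ℝ) (δ : Fin p → ℝ) :
    0 ≤ predSq X δ :=
  div_nonneg (Finset.sum_nonneg fun i _ => sq_nonneg _) (Nat.cast_nonneg n)

set_option maxHeartbeats 1600000 in
/-- Lasso prediction error bound under the restricted eigenvalue
condition. -/
theorem stmt6 (n p : ℕ) (hn : 0 < n) (hp : 0 < p)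
    (X : Matrix (Fin n) (Fin p) ℝ) (β βhat : Fin p → ℝ) (ε Y : Fin n → ℝ)
    (S : Finset (Fin p)) (hsupp : ∀ j ∉ S, β j = 0)
    (hY : Y = fun i => X.mulVec β i + ε i)
    (lam : ℝ) (hlam : 2 * (⨆ j : Fin p, |∑ i, X i j * ε i| / n) ≤ lam)
    (hmin : ∀ b : Fin p → ℝ,
      (∑ i, (Y i - X.mulVec βhat i) ^ 2) / (2 * n) + lam * ∑ j, |βhat j| ≤
      (∑ i, (Y i - X.mulVec b i) ^ 2) / (2 * n) + lam * ∑ j, |b j|)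
    (hphi : 0 < phiSq X 3 S) :
    predSq X (βhat - β) ≤
      4 * (lam + ⨆ j : Fin p, |∑ i, X i j * ε i| / n) ^ 2 * S.card / phiSq X 3 S ∧
    predSq X (βhat - β) ≤ 9 * lam ^ 2 * S.card / phiSq X 3 S := by
  have hnpos : (0:ℝ) < n := Nat.cast_pos.mpr hn
  set le' : ℝ := ⨆ j : Fin p, |∑ i, X i j * ε i| / n with hle'
  haveI : Nonempty (Fin p) := ⟨⟨0, hp⟩⟩
  have hbdd : BddAbove (Set.range fun j : Fin p => |∑ i, X i j * ε i| / n) :=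
    Set.Finite.bddAbove (Set.finite_range _)
  have hle_ge : ∀ j : Fin p, |∑ i, X i j * ε i| / n ≤ le' := fun j => le_ciSup hbdd j
  have hle0 : 0 ≤ le' := le_trans (by positivity) (hle_ge ⟨0, hp⟩)
  have hlam0 : 0 ≤ lam := le_trans (by linarith) hlam
  have hhalf : le' ≤ lam / 2 := by linarith
  clear_value le'
  set δ : Fin p → ℝ := βhat - β with hδdef
  set v : Fin n → ℝ := X.mulVec δ with hvdef
  set P : ℝ := predSq X δ with hPdef
  have hP0 : 0 ≤ P := predSq_nonneg X δ
  have hl1S : 0 ≤ l1On S δ := l1On_nonneg _ _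
  have hl1Sc : 0 ≤ l1On Sᶜ δ := l1On_nonneg _ _
  have hQ0 : 0 ≤ sqNormOn S δ := sqNormOn_nonneg _ _
  -- pointwise residual identities
  have hres : ∀ i, Y i - X.mulVec βhat i = ε i - v i := by
    intro i
    have hd : X.mulVec δ = X.mulVec βhat - X.mulVec β := by
      rw [hδdef, Matrix.mulVec_sub]
    rw [hY, hvdef, hd]
    simp only [Pi.sub_apply]
    ring
  have hres0 : ∀ i, Y i - X.mulVec β i = ε i := by
    intro i; rw [hY]; ring
  -- basic inequality from minimality
  have h2 := hmin β
  simp only [hres, hres0] at h2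
  have hexp : ∑ i, (ε i - v i) ^ 2 =
      ∑ i, ε i ^ 2 - 2 * ∑ i, ε i * v i + ∑ i, v i ^ 2 := by
    rw [Finset.mul_sum, ← Finset.sum_sub_distrib, ← Finset.sum_add_distrib]
    exact Finset.sum_congr rfl fun i _ => by ring
  rw [hexp] at h2
  set C : ℝ := ∑ i, ε i * v i with hCdef
  set D : ℝ := ∑ i, v i ^ 2 with hDdef
  have key1 : D / (2 * n) ≤ C / n + lam * (∑ j, |β j| - ∑ j, |βhat j|) := by
    have e1 : (∑ i, ε i ^ 2 - 2 * C + D) / (2 * n) =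
        (∑ i, ε i ^ 2) / (2 * n) - C / n + D / (2 * n) := by
      field_simp
    rw [e1] at h2
    linarith
  -- bound the cross term
  have hC : C = ∑ j, δ j * (∑ i, X i j * ε i) := by
    rw [hCdef, hvdef]
    simp only [Matrix.mulVec, dotProduct, Finset.mul_sum]
    rw [Finset.sum_comm]
    exact Finset.sum_congr rfl fun j _ => Finset.sum_congr rfl fun i _ => by ring
  have hsuml1 : l1On S δ + l1On Sᶜ δ = ∑ j, |δ j| := by
    rw [l1On, l1On, Finset.sum_add_sum_compl]
  have hCb : C / n ≤ le' * (l1On S δ + l1On Sᶜ δ) := by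
    rw [div_le_iff₀ hnpos, hsuml1]
    have h3 : C ≤ ∑ j, |δ j| * (le' * n) := by
      rw [hC]
      apply Finset.sum_le_sum
      intro j _
      have h4 : |∑ i, X i j * ε i| ≤ le' * n := by
        have := hle_ge j
        rwa [div_le_iff₀ hnpos] at this
      calc δ j * (∑ i, X i j * ε i) ≤ |δ j * (∑ i, X i j * ε i)| := le_abs_self _
        _ = |δ j| * |∑ i, X i j * ε i| := abs_mul _ _
        _ ≤ |δ j| * (le' * n) := mul_le_mul_of_nonneg_left h4 (abs_nonneg _)
    calc C ≤ ∑ j, |δ j| * (le' * n) := h3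
      _ = (∑ j, |δ j|) * (le' * n) := by rw [← Finset.sum_mul]
      _ = le' * (∑ j, |δ j|) * n := by ring
  -- bound the penalty difference
  have hBb : ∑ j, |β j| - ∑ j, |βhat j| ≤ l1On S δ - l1On Sᶜ δ := by
    have e1 : ∀ f : Fin p → ℝ, ∑ j, f j = ∑ j ∈ S, f j + ∑ j ∈ Sᶜ, f j :=
      fun f => (Finset.sum_add_sum_compl S f).symm
    rw [e1 (fun j => |β j|), e1 (fun j => |βhat j|), l1On, l1On]
    have hS : ∑ j ∈ S, |β j| - ∑ j ∈ S, |βhat j| ≤ ∑ j ∈ S, |δ j| := by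
      rw [← Finset.sum_sub_distrib]
      apply Finset.sum_le_sum
      intro j _
      calc |β j| - |βhat j| ≤ |β j - βhat j| := abs_sub_abs_le_abs_sub _ _
        _ = |δ j| := by rw [hδdef]; simp only [Pi.sub_apply]; rw [abs_sub_comm]
    have hSc1 : ∑ j ∈ Sᶜ, |β j| = 0 :=
      Finset.sum_eq_zero fun j hj => by
        rw [hsupp j (Finset.mem_compl.mp hj)]; exact abs_zero
    have hSc2 : ∑ j ∈ Sᶜ, |βhat j| = ∑ j ∈ Sᶜ, |δ j| :=
      Finset.sum_congr rfl fun j hj => by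
        rw [hδdef]; simp only [Pi.sub_apply]
        rw [hsupp j (Finset.mem_compl.mp hj), sub_zero]
    linarith
  -- KEY inequality
  have hPD : P = D / n := rfl
  have hD2 : D / (2 * n) = P / 2 := by rw [hPD]; ring
  have key : P / 2 ≤ (le' + lam) * l1On S δ + (le' - lam) * l1On Sᶜ δ := by
    have h5 : lam * (∑ j, |β j| - ∑ j, |βhat j|) ≤ lam * (l1On S δ - l1On Sᶜ δ) :=
      mul_le_mul_of_nonneg_left hBb hlam0
    have := key1
    rw [hD2] at this
    nlinarith [hCb, h5]
  clear_value P v C D δ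
  -- trivial case δ = 0
  rcases eq_or_ne δ 0 with h0 | hδ0
  · have hPz : P = 0 := by
      rw [hPdef, h0]; simp [predSq, Matrix.mulVec_zero]
    refine ⟨?_, ?_⟩ <;> rw [hPz] <;>
      exact div_nonneg (by positivity) hphi.le
  -- trivial case lam = 0
  rcases eq_or_lt_of_le hlam0 with hlamz | hlampos
  · have hle'0 : le' = 0 := le_antisymm (by linarith) hle0
    have hPz : P = 0 := by
      rw [hle'0, ← hlamz] at key
      linarith [key]
    refine ⟨?_, ?_⟩ <;> rw [hPz] <;>
      exact div_nonneg (by positivity) hphi.le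
  -- cone membership
  have hconeineq : l1On Sᶜ δ ≤ 3 * l1On S δ := by
    have h8 : (lam - le') * l1On Sᶜ δ ≤ (lam + le') * l1On S δ := by linarith [key, hP0]
    have h11 : 0 ≤ (2 * lam - 4 * le') * l1On S δ := mul_nonneg (by linarith) hl1S
    have h10 : (lam - le') * l1On Sᶜ δ ≤ (lam - le') * (3 * l1On S δ) := by linarith
    exact le_of_mul_le_mul_left h10 (by linarith : (0:ℝ) < lam - le')
  have hCS : l1On S δ ≤ Real.sqrt S.card * Real.sqrt (sqNormOn S δ) := by
    have h := sq_sum_le_card_mul_sum_sq (s := S) (f := fun i => |δ i|)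
    have h6 : (l1On S δ) ^ 2 ≤ (S.card : ℝ) * sqNormOn S δ := by
      rw [l1On, sqNormOn]
      calc (∑ i ∈ S, |δ i|) ^ 2 ≤ (S.card : ℝ) * ∑ i ∈ S, |δ i| ^ 2 := h
        _ = (S.card : ℝ) * ∑ i ∈ S, δ i ^ 2 := by
            congr 1; exact Finset.sum_congr rfl fun i _ => sq_abs _
    calc l1On S δ = Real.sqrt ((l1On S δ) ^ 2) := (Real.sqrt_sq hl1S).symm
      _ ≤ Real.sqrt ((S.card : ℝ) * sqNormOn S δ) := Real.sqrt_le_sqrt h6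
      _ = Real.sqrt S.card * Real.sqrt (sqNormOn S δ) :=
          Real.sqrt_mul (Nat.cast_nonneg _) _
  have hcone : cone 3 S δ := by
    unfold cone
    calc l1On Sᶜ δ ≤ 3 * l1On S δ := hconeineq
      _ ≤ 3 * (Real.sqrt S.card * Real.sqrt (sqNormOn S δ)) := by linarith
      _ = 3 * Real.sqrt S.card * Real.sqrt (sqNormOn S δ) := by ring
  -- positivity of sqNormOn S δ
  have hQpos : 0 < sqNormOn S δ := by
    rcases hQ0.lt_or_eq with h | h
    · exact h
    exfalso
    have hzS : ∀ i ∈ S, δ i = 0 := by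
      intro i hi
      have hz := (Finset.sum_eq_zero_iff_of_nonneg
        (fun i _ => sq_nonneg (δ i))).mp h.symm i hi
      exact pow_eq_zero_iff (two_ne_zero) |>.mp hz
    have hl1Sz : l1On S δ = 0 :=
      Finset.sum_eq_zero fun i hi => by rw [hzS i hi]; exact abs_zero
    have hlc : l1On Sᶜ δ ≤ 0 := by linarith [hconeineq]
    have hlcz : l1On Sᶜ δ = 0 := le_antisymm hlc hl1Sc
    have hzC : ∀ i ∈ Sᶜ, δ i = 0 := by
      intro i hi
      have hz := (Finset.sum_eq_zero_iff_of_nonneg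
        (fun i _ => abs_nonneg (δ i))).mp hlcz i hi
      exact abs_eq_zero.mp hz
    apply hδ0; funext i
    by_cases hi : i ∈ S
    exacts [hzS i hi, hzC i (Finset.mem_compl.mpr hi)]
  -- restricted eigenvalue bound
  have hφle : phiSq X 3 S ≤ P / sqNormOn S δ := by
    unfold phiSq
    exact csInf_le
      ⟨0, by
        rintro r ⟨δ', M, -, -, -, -, rfl⟩
        exact div_nonneg (predSq_nonneg _ _) (sqNormOn_nonneg _ _)⟩
      ⟨δ, S, hδ0, subset_rfl, le_rfl, hcone, by rw [hPdef]⟩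
  have hQle : sqNormOn S δ ≤ P / phiSq X 3 S := by
    rw [le_div_iff₀ hphi]
    have := (le_div_iff₀ hQpos).mp hφle
    linarith [this, mul_comm (sqNormOn S δ) (phiSq X 3 S)]
  -- combine into quadratic inequality
  have key2 : P / 2 ≤ (lam + le') * (Real.sqrt S.card * Real.sqrt (sqNormOn S δ)) := by
    have h1 : (le' - lam) * l1On Sᶜ δ ≤ 0 :=
      mul_nonpos_of_nonpos_of_nonneg (by linarith) hl1Sc
    have h2' : (le' + lam) * l1On S δ ≤
        (lam + le') * (Real.sqrt S.card * Real.sqrt (sqNormOn S δ)) := by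
      have := mul_le_mul_of_nonneg_left hCS (by linarith : (0:ℝ) ≤ lam + le')
      linarith
    linarith [key]
  have hsqQ : Real.sqrt (sqNormOn S δ) ≤ Real.sqrt (P / phiSq X 3 S) :=
    Real.sqrt_le_sqrt hQle
  have key3 : P / 2 ≤ (lam + le') * (Real.sqrt S.card * Real.sqrt (P / phiSq X 3 S)) :=
    key2.trans (mul_le_mul_of_nonneg_left
      (mul_le_mul_of_nonneg_left hsqQ (Real.sqrt_nonneg _)) (by linarith))
  have hsq : (P / 2) ^ 2 ≤
      ((lam + le') * (Real.sqrt S.card * Real.sqrt (P / phiSq X 3 S))) ^ 2 :=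
    pow_le_pow_left₀ (by positivity) key3 2
  have hrhs : ((lam + le') * (Real.sqrt S.card * Real.sqrt (P / phiSq X 3 S))) ^ 2
      = (lam + le') ^ 2 * ((S.card : ℝ) * (P / phiSq X 3 S)) := by
    rw [mul_pow, mul_pow, Real.sq_sqrt (Nat.cast_nonneg _),
      Real.sq_sqrt (div_nonneg hP0 hphi.le)]
  rw [hrhs] at hsq
  have e2 : (lam + le') ^ 2 * ((S.card : ℝ) * (P / phiSq X 3 S)) * phiSq X 3 S =
      (lam + le') ^ 2 * (S.card : ℝ) * P := by
    field_simp
  have hquad : P ^ 2 * phiSq X 3 S ≤ 4 * (lam + le') ^ 2 * (S.card : ℝ) * P := by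
    have h7 := mul_le_mul_of_nonneg_right hsq hphi.le
    rw [e2] at h7
    nlinarith [h7]
  -- first bound
  have bound1 : P ≤ 4 * (lam + le') ^ 2 * (S.card : ℝ) / phiSq X 3 S := by
    rcases hP0.lt_or_eq with hPpos | hPz
    · rw [le_div_iff₀ hphi]
      nlinarith [hquad, hPpos]
    · rw [← hPz]
      exact div_nonneg (by positivity) hphi.le
  have bound2 : P ≤ 9 * lam ^ 2 * (S.card : ℝ) / phiSq X 3 S := by
    refine bound1.trans ((div_le_div_iff_of_pos_right hphi).mpr ?_)
    refine mul_le_mul_of_nonneg_right ?_ (Nat.cast_nonneg _)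
    nlinarith [mul_nonneg (by linarith : (0:ℝ) ≤ 3/2*lam - (lam + le'))
      (by linarith : (0:ℝ) ≤ 3/2*lam + (lam + le'))]
  exact ⟨bound1, bound2⟩

end
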